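/- Let U : ℝ³ → M₂(ℂ) be differentiable with values in SU(2) and satisfy the odd (G-parity) reflection symmetry U(r x) = U(x)* for all x ∈ ℝ³. Then the baryon number density is even under the reflection: b(r x) = b(x) for all x ∈ ℝ³. -/

import Mathlib

open Matrix

attribute [local instance] Matrix.frobeniusNormedAddCommGroup Matrix.frobeniusNormedSpace

/-- Reflection of `ℝ³` across the plane `{x₃ = 0}`: `(x₁, x₂, x₃) ↦ (x₁, x₂, -x₃)`. -/
def reflPlane : (Fin 3 → ℝ) → (Fin 3 → ℝ) := fun x i => if i = 2 then -x i else x i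

attribute [local instance] Matrix.frobeniusNormedRing Matrix.frobeniusNormedAlgebra

noncomputable section

/-- Conjugate transpose as a continuous ℝ-linear map. -/
def starCLM : Matrix (Fin 2) (Fin 2) ℂ →L[ℝ] Matrix (Fin 2) (Fin 2) ℂ :=
  LinearMap.toContinuousLinearMap
  { toFun := fun A => Aᴴ
    map_add' := fun A B => by simp [conjTranspose_add]
    map_smul' := fun r A => by
      ext i j
      simp [conjTranspose_apply, star_smul] }

/-- The reflection as a continuous ℝ-linear map. -/
def reflCLM : (Fin 3 → ℝ) →L[ℝ] (Fin 3 → ℝ) :=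
  LinearMap.toContinuousLinearMap
  { toFun := reflPlane
    map_add' := fun x y => by
      funext i; simp only [reflPlane, Pi.add_apply]; split <;> ring
    map_smul' := fun r x => by
      funext i; simp only [reflPlane, Pi.smul_apply, RingHom.id_apply, smul_eq_mul]
      split <;> ring }

def eps : Fin 3 → ℝ := fun i => if i = 2 then -1 else 1

lemma refl_single (i : Fin 3) :
    reflPlane (Pi.single i 1) = eps i • (Pi.single i 1 : Fin 3 → ℝ) := by
  funext j
  fin_cases i <;> fin_cases j <;>
    norm_num [reflPlane, eps, Pi.single_apply, Fin.ext_iff]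

lemma smul_mul_smul3 (c0 c1 c2 : ℝ) (X0 X1 X2 : Matrix (Fin 2) (Fin 2) ℂ) :
    (c0 • X0) * (c1 • X1) * (c2 • X2) = (c0 * c1 * c2) • (X0 * X1 * X2) := by
  simp only [smul_mul_assoc, mul_smul_comm, smul_smul]
  ring_nf

lemma eps_prod (σ : Equiv.Perm (Fin 3)) : eps (σ 0) * eps (σ 1) * eps (σ 2) = -1 := by
  have : ∏ i : Fin 3, eps (σ i) = ∏ i : Fin 3, eps i := Equiv.prod_comp σ eps
  rw [Fin.prod_univ_three, Fin.prod_univ_three] at this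
  rw [this]
  norm_num [eps, Fin.ext_iff]

theorem stmt17 (U : (Fin 3 → ℝ) → Matrix (Fin 2) (Fin 2) ℂ)
    (hSU : ∀ y, (U y)ᴴ * U y = 1 ∧ (U y).det = 1)
    (hdiff : Differentiable ℝ U)
    (L : (Fin 3 → ℝ) → Fin 3 → Matrix (Fin 2) (Fin 2) ℂ)
    (hL : ∀ y i, L y i = (U y)ᴴ * fderiv ℝ U y (Pi.single i 1))
    (b : (Fin 3 → ℝ) → ℝ)
    (hb : ∀ x, b x = ∑ σ : Equiv.Perm (Fin 3),
      ((Equiv.Perm.sign σ : ℤ) : ℝ) * ((L x (σ 0) * L x (σ 1) * L x (σ 2)).trace).re)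
    (hodd : ∀ x, U (reflPlane x) = (U x)ᴴ) :
    ∀ x, b (reflPlane x) = b x := by
  intro x
  set V := U x with hV
  have hVu : (U x)ᴴ * U x = 1 := (hSU x).1
  have hVu' : U x * (U x)ᴴ = 1 := mul_eq_one_comm.mp hVu
  -- derivative of y ↦ (U y)ᴴ
  have hstar : ∀ y, HasFDerivAt (fun z => (U z)ᴴ)
      (starCLM.comp (fderiv ℝ U y)) y := fun y =>
    (starCLM.hasFDerivAt.comp y (hdiff y).hasFDerivAt)
  -- chain rule: U ∘ reflPlane
  have hcomp : HasFDerivAt (fun z => U (reflPlane z))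
      ((fderiv ℝ U (reflPlane x)).comp reflCLM) x := by
    have h1 : HasFDerivAt reflCLM (reflCLM : (Fin 3 → ℝ) →L[ℝ] (Fin 3 → ℝ)) x :=
      reflCLM.hasFDerivAt
    have h2 := (hdiff (reflPlane x)).hasFDerivAt
    have := h2.comp x h1
    exact this
  have hfun : (fun z => U (reflPlane z)) = fun z => (U z)ᴴ := funext hodd
  have hEq : (fderiv ℝ U (reflPlane x)).comp reflCLM = starCLM.comp (fderiv ℝ U x) :=
    (hfun ▸ hcomp).unique (hstar x)
  -- key: derivative of U at reflPlane x on basis vectors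
  have hDrefl : ∀ i, fderiv ℝ U (reflPlane x) (Pi.single i 1)
      = eps i • (fderiv ℝ U x (Pi.single i 1))ᴴ := by
    intro i
    have h0 := congrArg (fun (T : (Fin 3 → ℝ) →L[ℝ] Matrix (Fin 2) (Fin 2) ℂ) =>
      T (Pi.single i 1)) hEq
    simp only [ContinuousLinearMap.comp_apply] at h0
    have hr : reflCLM (Pi.single i 1) = eps i • (Pi.single i 1 : Fin 3 → ℝ) := by
      show reflPlane (Pi.single i 1) = _
      exact refl_single i
    rw [hr, (fderiv ℝ U (reflPlane x)).map_smul] at h0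
    have heps : eps i * eps i = 1 := by
      simp only [eps]; split <;> norm_num
    have hst : starCLM (fderiv ℝ U x (Pi.single i 1)) = (fderiv ℝ U x (Pi.single i 1))ᴴ := rfl
    rw [hst] at h0
    have h1 := congrArg (fun M => eps i • M) h0
    rw [smul_smul, heps, one_smul] at h1
    exact h1
  -- unitarity relation: (A i)ᴴ * V + Vᴴ * A i = 0
  have hskew : ∀ i, (fderiv ℝ U x (Pi.single i 1))ᴴ * U x
      + (U x)ᴴ * fderiv ℝ U x (Pi.single i 1) = 0 := by
    intro i
    have hmul : HasFDerivAt (fun z => (U z)ᴴ * U z)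
        ((U x)ᴴ • (fderiv ℝ U x)
          + (starCLM.comp (fderiv ℝ U x)).smulRight (U x)) x :=
      (hstar x).mul' (hdiff x).hasFDerivAt
    have hconst : HasFDerivAt (fun _ : Fin 3 → ℝ => (1 : Matrix (Fin 2) (Fin 2) ℂ))
        (0 : (Fin 3 → ℝ) →L[ℝ] Matrix (Fin 2) (Fin 2) ℂ) x := hasFDerivAt_const _ _
    have hfn : (fun z => (U z)ᴴ * U z) = fun _ => (1 : Matrix (Fin 2) (Fin 2) ℂ) :=
      funext fun y => (hSU y).1
    have h0 : ((U x)ᴴ • (fderiv ℝ U x)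
        + (starCLM.comp (fderiv ℝ U x)).smulRight (U x)) = 0 :=
      hmul.unique (hfn ▸ hconst)
    have := congrArg (fun (T : (Fin 3 → ℝ) →L[ℝ] Matrix (Fin 2) (Fin 2) ℂ) =>
      T (Pi.single i 1)) h0
    simp only [ContinuousLinearMap.add_apply, ContinuousLinearMap.smul_apply,
      ContinuousLinearMap.smulRight_apply, ContinuousLinearMap.comp_apply,
      ContinuousLinearMap.zero_apply, smul_eq_mul] at this
    have hst : starCLM (fderiv ℝ U x (Pi.single i 1)) = (fderiv ℝ U x (Pi.single i 1))ᴴ := rfl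
    rw [hst] at this
    linear_combination (norm := abel) this
  -- L at reflected point
  have hLrefl : ∀ i, L (reflPlane x) i = (-eps i) • (U x * L x i * (U x)ᴴ) := by
    intro i
    rw [hL, hodd, conjTranspose_conjTranspose, hDrefl]
    have hA : (fderiv ℝ U x (Pi.single i 1))ᴴ
        = -((U x)ᴴ * fderiv ℝ U x (Pi.single i 1) * (U x)ᴴ) := by
      have h := hskew i
      have h2 : (fderiv ℝ U x (Pi.single i 1))ᴴ * U x
          = -((U x)ᴴ * fderiv ℝ U x (Pi.single i 1)) := by
        linear_combination (norm := abel) h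
      calc (fderiv ℝ U x (Pi.single i 1))ᴴ
          = (fderiv ℝ U x (Pi.single i 1))ᴴ * (U x * (U x)ᴴ) := by rw [hVu', mul_one]
        _ = ((fderiv ℝ U x (Pi.single i 1))ᴴ * U x) * (U x)ᴴ := by rw [mul_assoc]
        _ = -((U x)ᴴ * fderiv ℝ U x (Pi.single i 1) * (U x)ᴴ) := by rw [h2, neg_mul]
    rw [hA, hL]
    have hmm : U x * -((U x)ᴴ * fderiv ℝ U x (Pi.single i 1) * (U x)ᴴ)
        = -(U x * ((U x)ᴴ * fderiv ℝ U x (Pi.single i 1)) * (U x)ᴴ) := by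
      noncomm_ring
    rw [mul_smul_comm, hmm, smul_neg, neg_smul]
  -- now compute b
  rw [hb, hb]
  refine Finset.sum_congr rfl fun σ _ => ?_
  congr 1
  rw [hLrefl, hLrefl, hLrefl, smul_mul_smul3]
  have hprod : (-eps (σ 0)) * (-eps (σ 1)) * (-eps (σ 2)) = 1 := by
    have := eps_prod σ; nlinarith [this]
  have hmatrix : (U x * L x (σ 0) * (U x)ᴴ) * (U x * L x (σ 1) * (U x)ᴴ)
      * (U x * L x (σ 2) * (U x)ᴴ)
      = U x * (L x (σ 0) * L x (σ 1) * L x (σ 2)) * (U x)ᴴ := by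
    have h := hVu
    calc (U x * L x (σ 0) * (U x)ᴴ) * (U x * L x (σ 1) * (U x)ᴴ)
        * (U x * L x (σ 2) * (U x)ᴴ)
        = U x * L x (σ 0) * ((U x)ᴴ * U x) * L x (σ 1) * ((U x)ᴴ * U x) * L x (σ 2) * (U x)ᴴ := by
          simp only [mul_assoc]
      _ = U x * (L x (σ 0) * L x (σ 1) * L x (σ 2)) * (U x)ᴴ := by
          rw [h]; simp only [mul_one, mul_assoc]
  rw [hmatrix]
  have htr : (U x * (L x (σ 0) * L x (σ 1) * L x (σ 2)) * (U x)ᴴ).trace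
      = (L x (σ 0) * L x (σ 1) * L x (σ 2)).trace := by
    rw [trace_mul_cycle, ← mul_assoc, hVu, one_mul]
  rw [trace_smul, htr]
  rw [hprod, one_smul]
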